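/- The Newton polytope of the Schur polynomial s_λ(x_1,...,x_m) equals the λ-permutohedron, i.e., the convex hull of the S_m-orbit of the point (λ_1,...,λ_m) in ℝ^m. -/

import Mathlib

/-- A semistandard Young tableau of shape `lam` (a partition with at most `m` parts)
with entries in `{1, ..., m}`: rows weakly increase, columns strictly increase. -/
structure SSYT (m : ℕ) (lam : Fin m → ℕ) where
  entry : Fin m → ℕ → ℕ
  one_le : ∀ i j, j < lam i → 1 ≤ entry i j
  le_m : ∀ i j, j < lam i → entry i j ≤ m
  row_weak : ∀ i j k, j ≤ k → k < lam i → entry i j ≤ entry i k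
  col_strict : ∀ i k : Fin m, ∀ j, i < k → j < lam i → j < lam k → entry i j < entry k j

/-- The content vector of a tableau: `content T v` is the number of cells whose
entry equals `v + 1` (entries are `1, ..., m`). -/
def SSYT.content {m : ℕ} {lam : Fin m → ℕ} (T : SSYT m lam) : Fin m → ℕ :=
  fun v => ∑ i : Fin m, ((Finset.range (lam i)).filter (fun j => T.entry i j = v.1 + 1)).card

open Finset

section Aux

lemma lowerset_mem_iff {m : ℕ} (s : Finset (Fin m))
    (hs : ∀ ⦃i i' : Fin m⦄, i' ≤ i → i ∈ s → i' ∈ s) (i : Fin m) :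
    i ∈ s ↔ i.1 < s.card := by
  constructor
  · intro hi
    have h1 : Finset.Iic i ⊆ s := fun x hx => hs (Finset.mem_Iic.1 hx) hi
    have := Finset.card_le_card h1
    rw [Fin.card_Iic] at this; omega
  · intro hi
    by_contra hns
    have h2 : s ⊆ Finset.Iio i := by
      intro x hx
      rw [Finset.mem_Iio]
      by_contra hxi
      exact hns (hs (not_lt.1 hxi) hx)
    have := Finset.card_le_card h2
    rw [Fin.card_Iio] at this; omega

lemma orderEmbOfFin_anti {α : Type*} [LinearOrder α] {s t : Finset α} (hst : s ⊆ t)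
    {i : ℕ} (hi : i < s.card) (hit : i < t.card) :
    t.orderEmbOfFin rfl ⟨i, hit⟩ ≤ s.orderEmbOfFin rfl ⟨i, hi⟩ := by
  by_contra hlt
  push_neg at hlt
  set a := s.orderEmbOfFin rfl ⟨i, hi⟩ with ha
  set b := t.orderEmbOfFin rfl ⟨i, hit⟩ with hb
  have h1 : i + 1 ≤ (s.filter (fun x => x ≤ a)).card := by
    have hsub : ((Finset.range (i+1)).image
        (fun l => s.orderEmbOfFin rfl ⟨min l i, by omega⟩)) ⊆ s.filter (fun x => x ≤ a) := by
      intro x hx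
      simp only [Finset.mem_image, Finset.mem_range] at hx
      obtain ⟨l, hl, rfl⟩ := hx
      refine Finset.mem_filter.2 ⟨Finset.orderEmbOfFin_mem _ _ _, ?_⟩
      exact (s.orderEmbOfFin rfl).monotone (by simp [Fin.le_def])
    refine le_trans ?_ (Finset.card_le_card hsub)
    rw [Finset.card_image_of_injOn, Finset.card_range]
    intro l1 h1 l2 h2 he
    simp only [Finset.mem_coe, Finset.mem_range] at h1 h2
    have := (s.orderEmbOfFin rfl).injective he
    have := Fin.mk.injEq .. ▸ this
    omega
  have h2 : (t.filter (fun x => x < b)).card ≤ i := by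
    have : ∀ x ∈ t.filter (fun x => x < b),
        ∃ l : Fin t.card, t.orderEmbOfFin rfl l = x ∧ l.1 < i := by
      intro x hx
      rw [Finset.mem_filter] at hx
      have hxr : x ∈ Set.range (t.orderEmbOfFin rfl) := by
        rw [Finset.range_orderEmbOfFin]; exact hx.1
      obtain ⟨l, hl⟩ := hxr
      refine ⟨l, hl, ?_⟩
      have : l < (⟨i, hit⟩ : Fin t.card) := by
        rw [← (t.orderEmbOfFin rfl).lt_iff_lt, hl]
        exact hx.2
      exact this
    choose g hg1 hg2 using this
    have hcc := Finset.card_le_card_of_injOn (s := t.filter (fun x => x < b))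
      (t := Finset.range i)
      (fun x => if hx : x ∈ t.filter (fun x => x < b) then (g x hx).1 else 0) ?_ ?_
    · simpa using hcc
    · intro x hx
      simp only [Finset.mem_coe] at hx ⊢
      simp only [hx, dif_pos, Finset.mem_range]
      exact hg2 x hx
    · intro x1 hx1 x2 hx2 he
      simp only [Finset.mem_coe] at hx1 hx2
      simp only [hx1, hx2, dif_pos] at he
      rw [← hg1 x1 hx1, ← hg1 x2 hx2]
      congr 1
      exact Fin.ext he
  have h3 : s.filter (fun x => x ≤ a) ⊆ t.filter (fun x => x < b) := by
    intro x hx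
    rw [Finset.mem_filter] at hx ⊢
    exact ⟨hst hx.1, lt_of_le_of_lt hx.2 hlt⟩
  have := Finset.card_le_card h3
  omega

lemma card_filter_val_lt {m : ℕ} (t : ℕ) (ht : t ≤ m) :
    (univ.filter (fun i : Fin m => i.1 < t)).card = t := by
  rcases eq_or_lt_of_le ht with heq | h
  · have he : univ.filter (fun i : Fin m => i.1 < t) = univ := by
      ext i
      simp only [Finset.mem_filter, Finset.mem_univ, true_and, iff_true]
      have := i.isLt; omega
    rw [he, Finset.card_univ, Fintype.card_fin, heq]
  · have he : univ.filter (fun i : Fin m => i.1 < t) = Finset.Iio ⟨t, h⟩ := by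
      ext i; simp [Finset.mem_Iio, Fin.lt_def]
    rw [he, Fin.card_Iio]

lemma card_filter_product_fst {α β : Type*} [DecidableEq α] (s : Finset α) (t : Finset β)
    (P : α → β → Prop) [∀ a b, Decidable (P a b)] :
    ((s ×ˢ t).filter fun q => P q.1 q.2).card = ∑ a ∈ s, (t.filter fun b => P a b).card := by
  rw [Finset.card_eq_sum_card_fiberwise (f := Prod.fst) (t := s)
    (fun q hq => (Finset.mem_product.1 (Finset.mem_filter.1 hq).1).1)]
  refine Finset.sum_congr rfl fun a ha => ?_
  refine Finset.card_nbij' (fun q => q.2) (fun b => (a, b)) ?_ ?_ ?_ ?_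
  · rintro ⟨a', b⟩ hq
    simp only [Finset.coe_filter, Set.mem_setOf_eq, Finset.mem_filter, Finset.mem_product] at hq ⊢
    obtain ⟨⟨⟨_, hb⟩, hP⟩, rfl⟩ := hq
    exact ⟨hb, hP⟩
  · intro b hb
    simp only [Finset.mem_filter, Finset.mem_product, Finset.mem_coe] at hb ⊢
    exact ⟨⟨⟨ha, hb.1⟩, hb.2⟩, trivial⟩
  · rintro ⟨a', b⟩ hq
    simp only [Finset.coe_filter, Set.mem_setOf_eq] at hq
    simp [hq.2]
  · intro b hb; rfl

lemma card_filter_product_snd {α β : Type*} [DecidableEq β] (s : Finset α) (t : Finset β)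
    (P : α → β → Prop) [∀ a b, Decidable (P a b)] :
    ((s ×ˢ t).filter fun q => P q.1 q.2).card = ∑ b ∈ t, (s.filter fun a => P a b).card := by
  rw [Finset.card_eq_sum_card_fiberwise (f := Prod.snd) (t := t)
    (fun q hq => (Finset.mem_product.1 (Finset.mem_filter.1 hq).1).2)]
  refine Finset.sum_congr rfl fun b hb => ?_
  refine Finset.card_nbij' (fun q => q.1) (fun a => (a, b)) ?_ ?_ ?_ ?_
  · rintro ⟨a, b'⟩ hq
    simp only [Finset.coe_filter, Set.mem_setOf_eq, Finset.mem_filter, Finset.mem_product] at hq ⊢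
    obtain ⟨⟨⟨ha, _⟩, hP⟩, rfl⟩ := hq
    exact ⟨ha, hP⟩
  · intro a ha
    simp only [Finset.mem_filter, Finset.mem_product, Finset.mem_coe] at ha ⊢
    exact ⟨⟨⟨ha.1, hb⟩, ha.2⟩, trivial⟩
  · rintro ⟨a, b'⟩ hq
    simp only [Finset.coe_filter, Set.mem_setOf_eq] at hq
    simp [hq.2]
  · intro a ha; rfl

end Aux

section Content

variable {m : ℕ} {lam : Fin m → ℕ} (T : SSYT m lam)

lemma plus_one_injective : Function.Injective (fun v : Fin m => v.1 + 1) := by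
  intro a b h
  simp only at h
  exact Fin.ext (by omega)

lemma row_fiber_sum (i : Fin m) (S : Finset (Fin m)) :
    ((Finset.range (lam i)).filter
        (fun j => T.entry i j ∈ S.image (fun v : Fin m => v.1 + 1))).card
      = ∑ v ∈ S, ((Finset.range (lam i)).filter (fun j => T.entry i j = v.1 + 1)).card := by
  set S1 := S.image (fun v : Fin m => v.1 + 1) with hS1
  rw [Finset.card_eq_sum_card_fiberwise (f := fun j => T.entry i j)
    (s := (Finset.range (lam i)).filter (fun j => T.entry i j ∈ S1)) (t := S1) (fun j hj => (Finset.mem_filter.1 hj).2)]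
  rw [hS1, Finset.sum_image (fun a _ b _ h => plus_one_injective h)]
  refine Finset.sum_congr rfl fun v hv => ?_
  rw [Finset.filter_filter]
  congr 1
  ext j
  simp only [Finset.mem_filter, Finset.mem_range]
  constructor
  · rintro ⟨h1, _, h3⟩; exact ⟨h1, h3⟩
  · rintro ⟨h1, h2⟩
    refine ⟨h1, ?_, h2⟩
    rw [h2]
    exact Finset.mem_image.2 ⟨v, hv, rfl⟩

/-- Sum of contents over a subset `S` equals the number of cells whose entry lies in `S+1`. -/
lemma sum_content_eq_card (S : Finset (Fin m)) :
    ∑ v ∈ S, T.content v =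
      ((univ ×ˢ Finset.range (univ.sup lam)).filter
        (fun p : Fin m × ℕ => p.2 < lam p.1 ∧
          T.entry p.1 p.2 ∈ S.image (fun v : Fin m => v.1 + 1))).card := by
  set L := univ.sup lam with hL
  set S1 := S.image (fun v : Fin m => v.1 + 1) with hS1
  have hLi : ∀ i, lam i ≤ L := fun i => Finset.le_sup (mem_univ i)
  calc ∑ v ∈ S, T.content v
      = ∑ i : Fin m, ∑ v ∈ S,
          ((Finset.range (lam i)).filter (fun j => T.entry i j = v.1 + 1)).card := by
        simp only [SSYT.content]; exact Finset.sum_comm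
    _ = ∑ i : Fin m, ((Finset.range (lam i)).filter (fun j => T.entry i j ∈ S1)).card :=
        Finset.sum_congr rfl fun i _ => (row_fiber_sum T i S).symm
    _ = ∑ i : Fin m, ((Finset.range L).filter
          (fun j => j < lam i ∧ T.entry i j ∈ S1)).card := by
        refine Finset.sum_congr rfl fun i _ => ?_
        congr 1
        ext j
        simp only [Finset.mem_filter, Finset.mem_range]
        constructor
        · rintro ⟨h1, h2⟩; exact ⟨lt_of_lt_of_le h1 (hLi i), h1, h2⟩
        · rintro ⟨_, h2, h3⟩; exact ⟨h2, h3⟩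
    _ = _ := (card_filter_product_fst univ (Finset.range L)
          (fun a b => b < lam a ∧ T.entry a b ∈ S1)).symm

lemma content_total : ∑ v : Fin m, T.content v = ∑ i, lam i := by
  have h2 := (sum_content_eq_card T univ).trans
    (card_filter_product_fst univ (Finset.range (univ.sup lam))
      (fun a b => b < lam a ∧ T.entry a b ∈ univ.image (fun v : Fin m => v.1 + 1)))
  rw [h2]
  refine Finset.sum_congr rfl fun i _ => ?_
  have he : (Finset.range (univ.sup lam)).filter
      (fun j => j < lam i ∧ T.entry i j ∈ univ.image (fun v : Fin m => v.1 + 1))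
      = Finset.range (lam i) := by
    ext j
    simp only [Finset.mem_filter, Finset.mem_range, Finset.mem_image, Finset.mem_univ, true_and]
    constructor
    · rintro ⟨_, h2, _⟩; exact h2
    · intro hj
      have h1 := T.one_le i j hj
      have hm := T.le_m i j hj
      exact ⟨lt_of_lt_of_le hj (Finset.le_sup (mem_univ i)), hj,
        ⟨⟨T.entry i j - 1, by omega⟩, show T.entry i j - 1 + 1 = T.entry i j by omega⟩⟩
  rw [he, Finset.card_range]

set_option maxHeartbeats 2000000 in
lemma content_dom (hlam : Antitone lam) (S : Finset (Fin m)) :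
    ∑ v ∈ S, T.content v ≤ ∑ i ∈ univ.filter (fun i : Fin m => i.1 < S.card), lam i := by
  classical
  set L := univ.sup lam with hLdef
  set S1 := S.image (fun v : Fin m => v.1 + 1) with hS1
  have hcol : ∀ j : ℕ, (univ.filter (fun i : Fin m => j < lam i ∧ T.entry i j ∈ S1)).card
      ≤ (univ.filter (fun i : Fin m => i.1 < S.card ∧ j < lam i)).card := by
    intro j
    have hb1 : (univ.filter (fun i : Fin m => j < lam i ∧ T.entry i j ∈ S1)).card ≤ S.card := by
      have hc := Finset.card_le_card_of_injOn (fun i => T.entry i j)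
        (s := univ.filter (fun i : Fin m => j < lam i ∧ T.entry i j ∈ S1)) (t := S1)
        (fun i hi => (Finset.mem_filter.1 hi).2.2) ?_
      · rwa [hS1, Finset.card_image_of_injective S plus_one_injective] at hc
      · intro i1 h1' i2 h2' he
        simp only [Finset.mem_coe, Finset.mem_filter, Finset.mem_univ, true_and] at h1' h2'
        rcases lt_trichotomy i1 i2 with hlt | heq | hgt
        · exact absurd he (ne_of_lt (T.col_strict i1 i2 j hlt h1'.1 h2'.1))
        · exact heq
        · exact absurd he.symm (ne_of_lt (T.col_strict i2 i1 j hgt h2'.1 h1'.1))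
    have hb2 : (univ.filter (fun i : Fin m => j < lam i ∧ T.entry i j ∈ S1)).card
        ≤ (univ.filter (fun i : Fin m => j < lam i)).card := by
      refine Finset.card_le_card fun i hi => ?_
      simp only [Finset.mem_filter] at hi ⊢
      exact ⟨hi.1, hi.2.1⟩
    have hlow := lowerset_mem_iff (univ.filter (fun i : Fin m => j < lam i))
      (fun i i' hle hi => by
        simp only [Finset.mem_filter, Finset.mem_univ, true_and] at hi ⊢
        exact lt_of_lt_of_le hi (hlam hle))
    have hC : univ.filter (fun i : Fin m => i.1 < S.card ∧ j < lam i)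
        = univ.filter (fun i : Fin m =>
            i.1 < min S.card ((univ.filter (fun i : Fin m => j < lam i)).card)) := by
      ext i
      simp only [Finset.mem_filter, Finset.mem_univ, true_and, lt_min_iff]
      constructor
      · rintro ⟨ha, hb⟩
        refine ⟨ha, ?_⟩
        have := (hlow i).1 (by simp [hb])
        exact this
      · rintro ⟨ha, hb⟩
        refine ⟨ha, ?_⟩
        have := (hlow i).2 hb
        simpa using this
    have hcm : (univ.filter (fun i : Fin m => j < lam i)).card ≤ m := by
      have := Finset.card_le_card
        (Finset.filter_subset (fun i : Fin m => j < lam i) (univ : Finset (Fin m)))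
      simpa using this
    rw [hC, card_filter_val_lt _ (le_trans (min_le_right _ _) hcm)]
    exact le_min hb1 hb2
  calc ∑ v ∈ S, T.content v
      = ∑ j ∈ Finset.range L, (univ.filter
          (fun i : Fin m => j < lam i ∧ T.entry i j ∈ S1)).card :=
        (sum_content_eq_card T S).trans
          (card_filter_product_snd univ (Finset.range L)
            (fun a b => b < lam a ∧ T.entry a b ∈ S1))
    _ ≤ ∑ j ∈ Finset.range L, (univ.filter
          (fun i : Fin m => i.1 < S.card ∧ j < lam i)).card :=
        Finset.sum_le_sum fun j _ => hcol j
    _ = ((univ ×ˢ Finset.range L).filter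
          (fun p : Fin m × ℕ => p.1.1 < S.card ∧ p.2 < lam p.1)).card :=
        (card_filter_product_snd univ (Finset.range L)
          (fun a b => a.1 < S.card ∧ b < lam a)).symm
    _ = ∑ i : Fin m, ((Finset.range L).filter (fun j => i.1 < S.card ∧ j < lam i)).card :=
        card_filter_product_fst univ (Finset.range L) (fun a b => a.1 < S.card ∧ b < lam a)
    _ = ∑ i : Fin m, if i.1 < S.card then lam i else 0 := by
        refine Finset.sum_congr rfl fun i _ => ?_
        by_cases hi : i.1 < S.card
        · rw [if_pos hi]
          have he : (Finset.range L).filter (fun j => i.1 < S.card ∧ j < lam i)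
              = Finset.range (lam i) := by
            ext j
            simp only [Finset.mem_filter, Finset.mem_range]
            constructor
            · rintro ⟨_, _, h3⟩; exact h3
            · intro hj
              exact ⟨lt_of_lt_of_le hj (Finset.le_sup (mem_univ i)), hi, hj⟩
          rw [he, Finset.card_range]
        · rw [if_neg hi]
          have he : (Finset.range L).filter (fun j => i.1 < S.card ∧ j < lam i) = ∅ := by
            ext j; simp only [Finset.mem_filter, Finset.notMem_empty, iff_false]
            rintro ⟨_, h2, _⟩; exact hi h2
          rw [he, Finset.card_empty]
    _ = ∑ i ∈ univ.filter (fun i : Fin m => i.1 < S.card), lam i :=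
        (Finset.sum_filter (fun i : Fin m => i.1 < S.card) lam).symm

end Content

section Rado

lemma hull_update_subset {m : ℕ} (lam : Fin m → ℕ) (j k : Fin m) (hjk : j ≠ k) (d : ℕ)
    (hd : 0 < d) (hdj : d ≤ lam j) (h2d : lam k + 2*d ≤ lam j) :
    {x : Fin m → ℝ | ∃ σ : Equiv.Perm (Fin m), x = fun i =>
      ((Function.update (Function.update lam j (lam j - d)) k (lam k + d)) (σ i) : ℝ)} ⊆
    convexHull ℝ {x : Fin m → ℝ | ∃ σ : Equiv.Perm (Fin m), x = fun i => (lam (σ i) : ℝ)} := by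
  rintro x ⟨σ, rfl⟩
  have hcast : (lam k : ℝ) + 2*(d:ℝ) ≤ (lam j : ℝ) := by
    have := (Nat.cast_le (α := ℝ)).2 h2d
    push_cast at this
    linarith
  have hd0 : (0:ℝ) ≤ (d:ℝ) := Nat.cast_nonneg d
  have hd1 : (1:ℝ) ≤ (d:ℝ) := by exact_mod_cast hd
  have hnum : (0:ℝ) < (lam j : ℝ) - (lam k : ℝ) := by
    have hk0 : (0:ℝ) ≤ (lam k : ℝ) := by positivity
    linarith
  set t : ℝ := (d:ℝ) / ((lam j : ℝ) - lam k) with ht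
  have ht0 : 0 ≤ t := div_nonneg hd0 hnum.le
  have ht1 : t ≤ 1 := by rw [div_le_one hnum]; linarith
  have htd : t * ((lam j : ℝ) - lam k) = d := div_mul_cancel₀ _ hnum.ne'
  have h1mem : (fun i => (lam (σ i):ℝ)) ∈
      {x : Fin m → ℝ | ∃ σ : Equiv.Perm (Fin m), x = fun i => (lam (σ i) : ℝ)} := ⟨σ, rfl⟩
  have h2mem : (fun i => (lam ((Equiv.swap j k) (σ i)):ℝ)) ∈
      {x : Fin m → ℝ | ∃ σ' : Equiv.Perm (Fin m), x = fun i => (lam (σ' i) : ℝ)} :=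
    ⟨σ.trans (Equiv.swap j k), rfl⟩
  apply segment_subset_convexHull h1mem h2mem
  refine ⟨1 - t, t, by linarith, ht0, by ring, ?_⟩
  funext i
  simp only [Pi.add_apply, Pi.smul_apply, smul_eq_mul]
  rcases eq_or_ne (σ i) j with h | hj
  · rw [h, Function.update_of_ne hjk, Function.update_self, Equiv.swap_apply_left]
    rw [Nat.cast_sub hdj]
    linarith [htd]
  · rcases eq_or_ne (σ i) k with h2 | hk
    · rw [h2, Function.update_self, Equiv.swap_apply_right]
      push_cast
      linarith [htd]
    · rw [Function.update_of_ne hk, Function.update_of_ne hj,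
        Equiv.swap_apply_of_ne_of_ne hj hk]
      ring

lemma rado {m : ℕ} (c : Fin m → ℕ) (hc : Antitone c) :
    ∀ (N : ℕ) (lam : Fin m → ℕ),
      (∑ i, ((lam i - c i) + (c i - lam i)) ≤ N) →
      (∀ r : Fin m, ∑ i ∈ Finset.Iic r, c i ≤ ∑ i ∈ Finset.Iic r, lam i) →
      (∑ i, c i = ∑ i, lam i) →
      (fun i => (c i : ℝ)) ∈ convexHull ℝ
        {x : Fin m → ℝ | ∃ σ : Equiv.Perm (Fin m), x = fun i => (lam (σ i) : ℝ)} := by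
  intro N
  induction N with
  | zero =>
    intro lam hN hdom hsum
    have heq : ∀ i, c i = lam i := by
      intro i
      have h0 := Finset.sum_eq_zero_iff.1 (Nat.le_zero.1 hN) i (mem_univ i)
      omega
    exact subset_convexHull ℝ _ ⟨1, by funext i; simp [heq i]⟩
  | succ N ih =>
    intro lam hN hdom hsum
    by_cases hceq : ∀ i, c i = lam i
    · exact subset_convexHull ℝ _ ⟨1, by funext i; simp [hceq i]⟩
    · push_neg at hceq
      have hs : (univ.filter (fun i => c i ≠ lam i)).Nonempty := by
        obtain ⟨i, hi⟩ := hceq; exact ⟨i, by simp [hi]⟩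
      set j := (univ.filter (fun i => c i ≠ lam i)).min' hs with hjdef
      have hjs : c j ≠ lam j := by
        have := Finset.min'_mem _ hs; simpa using (Finset.mem_filter.1 this).2
      have hjmin : ∀ i, i < j → c i = lam i := by
        intro i hij; by_contra h
        exact absurd (Finset.min'_le _ i (by simp [h])) (not_le.2 hij)
      have hcj : c j < lam j := by
        have h1 := hdom j
        rw [← Finset.Iio_insert, Finset.sum_insert (by simp),
          Finset.sum_insert (by simp)] at h1
        have h2 : ∑ i ∈ Finset.Iio j, c i = ∑ i ∈ Finset.Iio j, lam i :=
          Finset.sum_congr rfl fun i hi => hjmin i (Finset.mem_Iio.1 hi)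
        omega
      have hex : (univ.filter (fun i => lam i < c i)).Nonempty := by
        by_contra h
        rw [Finset.not_nonempty_iff_eq_empty, Finset.filter_eq_empty_iff] at h
        have hlt : ∑ i, c i < ∑ i, lam i :=
          Finset.sum_lt_sum (fun i _ => not_lt.1 (h (mem_univ i))) ⟨j, mem_univ j, hcj⟩
        omega
      set k := (univ.filter (fun i => lam i < c i)).min' hex with hkdef
      have hk : lam k < c k := by
        have := Finset.min'_mem _ hex; simpa using (Finset.mem_filter.1 this).2
      have hkmin : ∀ i, i < k → c i ≤ lam i := by
        intro i hik; by_contra h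
        exact absurd (Finset.min'_le _ i (by simp [not_le.1 h])) (not_le.2 hik)
      have hjk : j < k := by
        have h1 : j ≤ k := by
          by_contra h
          push_neg at h
          have := hjmin k h
          omega
        have h2 : j ≠ k := by
          intro h; rw [h] at hcj; omega
        exact lt_of_le_of_ne h1 h2
      have hjkne : j ≠ k := Fin.ne_of_lt hjk
      set d := min (lam j - c j) (c k - lam k) with hddef
      have hd0 : 0 < d := lt_min (by omega) (by omega)
      have hdlj : c j + d ≤ lam j := by
        have := min_le_left (lam j - c j) (c k - lam k); omega
      have hdlk : lam k + d ≤ c k := by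
        have := min_le_right (lam j - c j) (c k - lam k); omega
      have hcc : c k ≤ c j := hc hjk.le
      have h2d : lam k + 2*d ≤ lam j := by omega
      set lam' := Function.update (Function.update lam j (lam j - d)) k (lam k + d) with hl'
      have hlj : lam' j = lam j - d := by
        rw [hl', Function.update_of_ne hjkne, Function.update_self]
      have hlk : lam' k = lam k + d := by rw [hl', Function.update_self]
      have hlo : ∀ x, x ≠ j → x ≠ k → lam' x = lam x := fun x h1 h2 => by
        rw [hl', Function.update_of_ne h2, Function.update_of_ne h1]
      have hkey : ∀ s : Finset (Fin m), j ∈ s → k ∈ s →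
          ∑ x ∈ s, lam' x = ∑ x ∈ s, lam x := by
        intro s hjs hks
        have hje : j ∈ s.erase k := Finset.mem_erase.2 ⟨hjkne, hjs⟩
        rw [← Finset.add_sum_erase _ lam' hks, ← Finset.add_sum_erase _ lam hks,
          ← Finset.add_sum_erase _ lam' hje, ← Finset.add_sum_erase _ lam hje]
        have hrest : ∑ x ∈ (s.erase k).erase j, lam' x = ∑ x ∈ (s.erase k).erase j, lam x := by
          refine Finset.sum_congr rfl fun x hx => ?_
          have h1 := Finset.mem_erase.1 hx
          have h2 := Finset.mem_erase.1 h1.2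
          exact hlo x h1.1 h2.1
        rw [hrest, hlj, hlk]
        omega
      -- measure decreases
      have hterm : ∀ i, ((lam' i - c i) + (c i - lam' i))
          + ((if i = j then d else 0) + (if i = k then d else 0))
          = ((lam i - c i) + (c i - lam i)) := by
        intro i
        rcases eq_or_ne i j with rfl | h1
        · rw [hlj]; simp [hjkne]; omega
        · rcases eq_or_ne i k with rfl | h2
          · rw [hlk]; simp [h1]; omega
          · rw [hlo i h1 h2]; simp [h1, h2]
      have h1 : ∑ i, (((lam' i - c i) + (c i - lam' i))
          + ((if i = j then d else 0) + (if i = k then d else 0)))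
          = ∑ i, ((lam i - c i) + (c i - lam i)) :=
        Finset.sum_congr rfl fun i _ => hterm i
      rw [Finset.sum_add_distrib, Finset.sum_add_distrib, Finset.sum_add_distrib,
        Finset.sum_ite_eq' univ j (fun _ => d), Finset.sum_ite_eq' univ k (fun _ => d)] at h1
      simp only [mem_univ, if_true] at h1
      have hsplit1 : ∑ i, ((lam' i - c i) + (c i - lam' i))
          = ∑ i, (lam' i - c i) + ∑ i, (c i - lam' i) := Finset.sum_add_distrib
      have hN' : ∑ i, ((lam' i - c i) + (c i - lam' i)) ≤ N := by omega
      have hdom' : ∀ r : Fin m, ∑ i ∈ Finset.Iic r, c i ≤ ∑ i ∈ Finset.Iic r, lam' i := by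
        intro r
        rcases lt_or_ge r j with hrj | hjr
        · have : ∑ i ∈ Finset.Iic r, lam' i = ∑ i ∈ Finset.Iic r, lam i := by
            refine Finset.sum_congr rfl fun x hx => ?_
            have hxr := Finset.mem_Iic.1 hx
            exact hlo x (Fin.ne_of_lt (lt_of_le_of_lt hxr hrj))
              (Fin.ne_of_lt (lt_of_le_of_lt hxr (hrj.trans hjk)))
          rw [this]; exact hdom r
        · rcases lt_or_ge r k with hrk | hkr
          · have hjm : j ∈ Finset.Iic r := Finset.mem_Iic.2 hjr
            have e1 : ∑ x ∈ Finset.Iic r, lam' x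
                = (lam j - d) + ∑ x ∈ (Finset.Iic r).erase j, lam x := by
              rw [← Finset.add_sum_erase _ lam' hjm, hlj]
              congr 1
              refine Finset.sum_congr rfl fun x hx => ?_
              have h1 := Finset.mem_erase.1 hx
              exact hlo x h1.1 (Fin.ne_of_lt (lt_of_le_of_lt (Finset.mem_Iic.1 h1.2) hrk))
            have e2 : ∑ x ∈ Finset.Iic r, c x = c j + ∑ x ∈ (Finset.Iic r).erase j, c x :=
              (Finset.add_sum_erase _ c hjm).symm
            have e3 : ∑ x ∈ (Finset.Iic r).erase j, c x
                ≤ ∑ x ∈ (Finset.Iic r).erase j, lam x := by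
              refine Finset.sum_le_sum fun x hx => ?_
              have h1 := Finset.mem_erase.1 hx
              rcases lt_or_gt_of_ne h1.1 with hlt | hgt
              · exact (hjmin x hlt).le
              · exact hkmin x (lt_of_le_of_lt (Finset.mem_Iic.1 h1.2) hrk)
            omega
          · have hjm : j ∈ Finset.Iic r := Finset.mem_Iic.2 hjr
            have hkm : k ∈ Finset.Iic r := Finset.mem_Iic.2 hkr
            rw [hkey _ hjm hkm]; exact hdom r
      have hsum' : ∑ i, c i = ∑ i, lam' i := by
        rw [hkey univ (mem_univ j) (mem_univ k)]; exact hsum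
      have hmem := ih lam' hN' hdom' hsum'
      have hsub := convexHull_min
        (hull_update_subset lam j k hjkne d hd0 (by omega) h2d) (convex_convexHull ℝ _)
      rw [hl'] at hmem
      exact hsub hmem

end Rado

section Key

lemma keyT_cell {m : ℕ} (lam : Fin m → ℕ) (hlam : Antitone lam) (σ : Equiv.Perm (Fin m))
    (i : Fin m) (j : ℕ) :
    j < lam i ↔ i.1 < (univ.filter (fun v : Fin m => j < lam (σ v))).card := by
  have hcard : (univ.filter (fun v : Fin m => j < lam (σ v))).card
      = (univ.filter (fun i : Fin m => j < lam i)).card := by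
    refine Finset.card_equiv σ fun v => ?_
    simp
  rw [hcard, ← lowerset_mem_iff (univ.filter (fun i : Fin m => j < lam i))
    (fun a a' hle ha => by
      simp only [Finset.mem_filter, Finset.mem_univ, true_and] at ha ⊢
      exact lt_of_lt_of_le ha (hlam hle))]
  simp

/-- the key tableau associated to a permutation -/
noncomputable def keyT {m : ℕ} (lam : Fin m → ℕ) (hlam : Antitone lam)
    (σ : Equiv.Perm (Fin m)) : SSYT m lam where
  entry i j := if h : i.1 < (univ.filter (fun v : Fin m => j < lam (σ v))).card
      then ((univ.filter (fun v : Fin m => j < lam (σ v))).orderEmbOfFin rfl ⟨i.1, h⟩).1 + 1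
      else 0
  one_le i j hj := by
    rw [dif_pos ((keyT_cell lam hlam σ i j).1 hj)]
    omega
  le_m i j hj := by
    have h := (keyT_cell lam hlam σ i j).1 hj
    rw [dif_pos h]
    have hlt := ((univ.filter (fun v : Fin m => j < lam (σ v))).orderEmbOfFin
      rfl ⟨i.1, h⟩).isLt
    omega
  row_weak i j k hjk hk := by
    have hji : j < lam i := lt_of_le_of_lt hjk hk
    have h1 := (keyT_cell lam hlam σ i j).1 hji
    have h2 := (keyT_cell lam hlam σ i k).1 hk
    rw [dif_pos h1, dif_pos h2]
    have hsub : univ.filter (fun v : Fin m => k < lam (σ v))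
        ⊆ univ.filter (fun v : Fin m => j < lam (σ v)) := by
      intro v hv
      simp only [Finset.mem_filter, Finset.mem_univ, true_and] at hv ⊢
      omega
    have hle := orderEmbOfFin_anti hsub h2 h1
    rw [Fin.le_def] at hle
    omega
  col_strict i k j hik hji hjk := by
    have h1 := (keyT_cell lam hlam σ i j).1 hji
    have h2 := (keyT_cell lam hlam σ k j).1 hjk
    rw [dif_pos h1, dif_pos h2]
    have hlt := ((univ.filter (fun v : Fin m => j < lam (σ v))).orderEmbOfFin
        rfl).strictMono (show (⟨i.1, h1⟩ : Fin _) < ⟨k.1, h2⟩ from hik)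
    rw [Fin.lt_def] at hlt
    omega

lemma keyT_content {m : ℕ} (lam : Fin m → ℕ) (hlam : Antitone lam) (σ : Equiv.Perm (Fin m)) :
    (keyT lam hlam σ).content = fun v => lam (σ v) := by
  classical
  funext v
  set T := keyT lam hlam σ with hT
  have hentry : ∀ (i : Fin m) (j : ℕ), T.entry i j =
      if h : i.1 < (univ.filter (fun w : Fin m => j < lam (σ w))).card
      then ((univ.filter (fun w : Fin m => j < lam (σ w))).orderEmbOfFin rfl ⟨i.1, h⟩).1 + 1
      else 0 := fun i j => rfl
  set L := univ.sup lam with hL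
  have h1 : T.content v = ∑ v' ∈ ({v} : Finset (Fin m)), T.content v' := by
    rw [Finset.sum_singleton]
  rw [h1]
  have h2 := (sum_content_eq_card T {v}).trans
    (card_filter_product_snd univ (Finset.range L)
      (fun a b => b < lam a ∧
        T.entry a b ∈ ({v} : Finset (Fin m)).image (fun w : Fin m => w.1 + 1)))
  rw [h2]
  have hone : ∀ j : ℕ, (univ.filter (fun i : Fin m => j < lam i ∧
      T.entry i j ∈ ({v} : Finset (Fin m)).image (fun w : Fin m => w.1 + 1))).card
      = if j < lam (σ v) then 1 else 0 := by
    intro j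
    have hCm : (univ.filter (fun w : Fin m => j < lam (σ w))).card ≤ m := by
      have := Finset.card_le_card (Finset.filter_subset
        (fun w : Fin m => j < lam (σ w)) (univ : Finset (Fin m)))
      simpa using this
    by_cases hj : j < lam (σ v)
    · rw [if_pos hj]
      rw [Finset.card_eq_one]
      have hvmem : v ∈ univ.filter (fun w : Fin m => j < lam (σ w)) := by simp [hj]
      obtain ⟨r, hrv⟩ : ∃ r : Fin (univ.filter (fun w : Fin m => j < lam (σ w))).card,
          (univ.filter (fun w : Fin m => j < lam (σ w))).orderEmbOfFin rfl r = v := by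
        have hmr : v ∈ Set.range
            ((univ.filter (fun w : Fin m => j < lam (σ w))).orderEmbOfFin rfl) := by
          rw [Finset.range_orderEmbOfFin]
          exact_mod_cast hvmem
        exact hmr
      have hrm : r.1 < m := lt_of_lt_of_le r.isLt hCm
      refine ⟨⟨r.1, hrm⟩, ?_⟩
      ext i
      simp only [Finset.mem_filter, Finset.mem_univ, true_and, Finset.mem_singleton,
        Finset.image_singleton]
      constructor
      · rintro ⟨hil, he⟩
        have hi' := (keyT_cell lam hlam σ i j).1 hil
        rw [hentry i j, dif_pos hi'] at he
        have heq2 : (univ.filter (fun w : Fin m => j < lam (σ w))).orderEmbOfFin rfl ⟨i.1, hi'⟩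
            = (univ.filter (fun w : Fin m => j < lam (σ w))).orderEmbOfFin rfl r := by
          rw [hrv]
          exact Fin.ext (by omega)
        have h3 := ((univ.filter (fun w : Fin m =>
            j < lam (σ w))).orderEmbOfFin rfl).injective heq2
        refine Fin.ext ?_
        have h4 := Fin.mk.injEq .. ▸ h3
        exact h4
      · rintro rfl
        have hi' : (⟨r.1, hrm⟩ : Fin m).1
            < (univ.filter (fun w : Fin m => j < lam (σ w))).card := r.isLt
        refine ⟨(keyT_cell lam hlam σ ⟨r.1, hrm⟩ j).2 hi', ?_⟩
        rw [hentry _ j, dif_pos hi']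
        have hre : ((univ.filter (fun w : Fin m => j < lam (σ w))).orderEmbOfFin rfl
            ⟨(⟨r.1, hrm⟩ : Fin m).1, hi'⟩)
            = (univ.filter (fun w : Fin m => j < lam (σ w))).orderEmbOfFin rfl r := by
          congr 1
        rw [hre, hrv]
    · rw [if_neg hj]
      rw [Finset.card_eq_zero, Finset.eq_empty_iff_forall_notMem]
      intro i hi
      simp only [Finset.mem_filter, Finset.mem_univ, true_and,
        Finset.image_singleton, Finset.mem_singleton] at hi
      obtain ⟨hil, he⟩ := hi
      have hi' := (keyT_cell lam hlam σ i j).1 hil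
      rw [hentry i j, dif_pos hi'] at he
      have hmem := Finset.orderEmbOfFin_mem
        (univ.filter (fun w : Fin m => j < lam (σ w))) rfl ⟨i.1, hi'⟩
      have hveq : (univ.filter (fun w : Fin m => j < lam (σ w))).orderEmbOfFin rfl ⟨i.1, hi'⟩
          = v := Fin.ext (by omega)
      rw [hveq] at hmem
      simp only [Finset.mem_filter, Finset.mem_univ, true_and] at hmem
      exact hj hmem
  rw [Finset.sum_congr rfl (fun j _ => hone j)]
  have hvL : lam (σ v) ≤ L := Finset.le_sup (mem_univ (σ v))
  have hcf : (∑ j ∈ Finset.range L, if j < lam (σ v) then 1 else 0)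
      = ((Finset.range L).filter (fun j => j < lam (σ v))).card :=
    (Finset.card_filter _ _).symm
  rw [hcf]
  have hfe : (Finset.range L).filter (fun j => j < lam (σ v)) = Finset.range (lam (σ v)) := by
    ext j
    simp only [Finset.mem_filter, Finset.mem_range]
    omega
  rw [hfe, Finset.card_range]

end Key

/-- The Newton polytope of the Schur polynomial `s_λ(x_1, ..., x_m)` (the convex hull
of the content vectors of semistandard Young tableaux of shape `λ` with entries in `[m]`)
equals the `λ`-permutohedron: the convex hull of the `S_m`-orbit of `(λ_1, ..., λ_m)`. -/
theorem newton_schur_eq_permutohedron (m : ℕ) (lam : Fin m → ℕ) (hlam : Antitone lam) :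
    convexHull ℝ {x : Fin m → ℝ | ∃ T : SSYT m lam, x = fun v => (T.content v : ℝ)} =
      convexHull ℝ {x : Fin m → ℝ | ∃ σ : Equiv.Perm (Fin m), x = fun i => (lam (σ i) : ℝ)} := by
  classical
  apply Set.Subset.antisymm
  · refine convexHull_min ?_ (convex_convexHull ℝ _)
    rintro x ⟨T, rfl⟩
    set c := T.content with hc
    set τ : Equiv.Perm (Fin m) := (Fin.revPerm).trans (Tuple.sort c) with hτ
    have hanti : Antitone (fun i => c (τ i)) := by
      intro a b hab
      have hms := Tuple.monotone_sort c (show Fin.rev b ≤ Fin.rev a from Fin.rev_le_rev.2 hab)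
      simp only [Function.comp_apply] at hms
      simp only [hτ, Equiv.trans_apply, Fin.revPerm_apply]
      exact hms
    have hdom : ∀ r : Fin m, ∑ i ∈ Finset.Iic r, c (τ i) ≤ ∑ i ∈ Finset.Iic r, lam i := by
      intro r
      have himg : ∑ i ∈ Finset.Iic r, c (τ i) = ∑ v ∈ (Finset.Iic r).image τ, c v :=
        (Finset.sum_image (fun a _ b _ h => τ.injective h)).symm
      rw [himg]
      have hcard : ((Finset.Iic r).image τ).card = r.1 + 1 := by
        rw [Finset.card_image_of_injective _ τ.injective, Fin.card_Iic]
      have h := content_dom T hlam ((Finset.Iic r).image τ)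
      rw [hcard] at h
      refine h.trans (le_of_eq ?_)
      refine Finset.sum_congr ?_ (fun _ _ => rfl)
      ext i
      simp only [Finset.mem_filter, Finset.mem_univ, true_and, Finset.mem_Iic, Fin.le_def]
      omega
    have hsum : ∑ i, c (τ i) = ∑ i, lam i := by
      rw [Equiv.sum_comp τ c]
      exact content_total T
    have hmem := rado (fun i => c (τ i)) hanti
      (∑ i, ((lam i - c (τ i)) + (c (τ i) - lam i))) lam le_rfl hdom hsum
    let f : (Fin m → ℝ) →ₗ[ℝ] (Fin m → ℝ) := LinearMap.funLeft ℝ ℝ τ.symm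
    have himg := f.image_convexHull
      {x : Fin m → ℝ | ∃ σ : Equiv.Perm (Fin m), x = fun i => (lam (σ i) : ℝ)}
    have horb : f '' {x : Fin m → ℝ | ∃ σ : Equiv.Perm (Fin m), x = fun i => (lam (σ i) : ℝ)}
        = {x : Fin m → ℝ | ∃ σ : Equiv.Perm (Fin m), x = fun i => (lam (σ i) : ℝ)} := by
      ext y
      constructor
      · rintro ⟨z, ⟨σ, rfl⟩, rfl⟩
        exact ⟨τ.symm.trans σ, rfl⟩
      · rintro ⟨σ, rfl⟩
        refine ⟨fun i => (lam (σ (τ i)) : ℝ), ⟨τ.trans σ, rfl⟩, ?_⟩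
        funext i
        simp [f, LinearMap.funLeft, Equiv.apply_symm_apply]
    have hmem2 : f (fun i => (c (τ i) : ℝ)) ∈
        f '' (convexHull ℝ {x : Fin m → ℝ | ∃ σ : Equiv.Perm (Fin m),
          x = fun i => (lam (σ i) : ℝ)}) := Set.mem_image_of_mem f hmem
    rw [himg, horb] at hmem2
    have hfx : f (fun i => (c (τ i) : ℝ)) = fun v => (c v : ℝ) := by
      funext i
      simp [f, LinearMap.funLeft, Equiv.apply_symm_apply]
    rwa [hfx] at hmem2
  · refine convexHull_min ?_ (convex_convexHull ℝ _)
    rintro x ⟨σ, rfl⟩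
    refine subset_convexHull ℝ _ ⟨keyT lam hlam σ, ?_⟩
    rw [keyT_content lam hlam σ]
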